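/- The function γ0(x) = ∫_ℝ (n0(y)+f0(y+x))·y²·sgn(y) dy is monotonically non-decreasing on [0,∞): for 0 ≤ x₁ ≤ x₂, γ0(x₁) ≤ γ0(x₂). -/

import Mathlib

open MeasureTheory Real

noncomputable def f0 (x : ℝ) : ℝ := 1 / (Real.exp x + 1)
noncomputable def n0 (y : ℝ) : ℝ := 1 / (Real.exp y - 1)
noncomputable def w (x : ℝ) : ℝ := f0 x * (1 - f0 x)
noncomputable def k0 (x y : ℝ) : ℝ := (n0 y + f0 (y + x)) * y ^ 2 * Real.sign y
noncomputable def K0bar (e u : ℝ) : ℝ := (n0 (u - e) + f0 u) * (u - e) ^ 2 * Real.sign (u - e)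
noncomputable def Gamma0 (e : ℝ) : ℝ := ∫ u, K0bar e u
noncomputable def gamma0 (x : ℝ) : ℝ := ∫ y, k0 x y

/-! ### Auxiliary lemmas -/

lemma measurable_real_sign : Measurable Real.sign := by
  unfold Real.sign
  refine Measurable.ite ?_ measurable_const (Measurable.ite ?_ measurable_const measurable_const)
  · exact measurableSet_Iio
  · exact measurableSet_Ioi

lemma measurable_k0 (x : ℝ) : Measurable (k0 x) := by
  unfold k0 n0 f0
  exact (((measurable_const.div ((Real.measurable_exp).sub measurable_const)).add
    (measurable_const.div (((measurable_id.add_const x).exp).add measurable_const))).mul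
    (measurable_id.pow_const 2)).mul measurable_real_sign

lemma f0_pos (u : ℝ) : 0 < f0 u := by
  unfold f0
  positivity

lemma f0_le_one (u : ℝ) : f0 u ≤ 1 := by
  unfold f0
  rw [div_le_one (by positivity)]
  nlinarith [Real.exp_pos u]

lemma f0_le_exp_neg (u : ℝ) : f0 u ≤ Real.exp (-u) := by
  unfold f0
  rw [Real.exp_neg, ← one_div]
  exact one_div_le_one_div_of_le (Real.exp_pos u) (by linarith)

lemma one_sub_f0_eq (u : ℝ) : 1 - f0 u = Real.exp u / (Real.exp u + 1) := by
  unfold f0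
  field_simp
  ring

lemma one_sub_f0_le (u : ℝ) : 1 - f0 u ≤ Real.exp u := by
  rw [one_sub_f0_eq]
  exact div_le_self (Real.exp_pos u).le (by nlinarith [Real.exp_pos u])

/-- The key algebraic inequality. -/
lemma key_ineq (x₁ x₂ y : ℝ) (h0 : 0 ≤ x₁) (h12 : x₁ ≤ x₂) (hy : 0 ≤ y) :
    f0 (x₂ - y) + f0 (x₁ + y) ≤ f0 (x₁ - y) + f0 (x₂ + y) := by
  have ha : 1 ≤ Real.exp x₁ := Real.one_le_exp h0
  have hb : Real.exp x₁ ≤ Real.exp x₂ := Real.exp_le_exp.2 h12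
  have ht : 1 ≤ Real.exp y := Real.one_le_exp hy
  set a := Real.exp x₁
  set b := Real.exp x₂
  set t := Real.exp y
  have ht0 : (0:ℝ) < t := lt_of_lt_of_le one_pos ht
  have ha0 : (0:ℝ) < a := lt_of_lt_of_le one_pos ha
  have hb0 : (0:ℝ) < b := lt_of_lt_of_le ha0 hb
  have e1 : Real.exp (x₁ - y) = a / t := Real.exp_sub _ _
  have e2 : Real.exp (x₂ - y) = b / t := Real.exp_sub _ _
  have e3 : Real.exp (x₁ + y) = a * t := Real.exp_add _ _
  have e4 : Real.exp (x₂ + y) = b * t := Real.exp_add _ _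
  unfold f0
  rw [e1, e2, e3, e4]
  have r1 : 1/(a/t+1) = t/(a+t) := by
    rw [div_add_one (ne_of_gt ht0), one_div_div]
  have r2 : 1/(b/t+1) = t/(b+t) := by
    rw [div_add_one (ne_of_gt ht0), one_div_div]
  rw [r1, r2, ← sub_nonneg]
  have key : 0 ≤ (b - a) * ((a * b - 1) * (t^2 - 1)) := by
    have hab : 1 ≤ a * b := le_trans ha (le_mul_of_one_le_right (le_of_lt ha0) (le_trans ha hb))
    have h2 : 1 ≤ t^2 := by nlinarith
    exact mul_nonneg (by linarith) (mul_nonneg (by linarith) (by linarith))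
  have heq : t/(a+t) + 1/(b*t+1) - (t/(b+t) + 1/(a*t+1))
      = t * ((b - a) * ((a * b - 1) * (t^2 - 1))) / ((a+t)*(b+t)*((a*t+1)*(b*t+1))) := by
    field_simp
    ring
  rw [heq]
  positivity

/-- The dominating function is integrable. -/
lemma int_H : Integrable (fun y : ℝ => (1 + y^2) * Real.exp (-|y|)) := by
  have g1 : IntegrableOn (fun y : ℝ => Real.exp (-y)) (Set.Ioi 0) := by
    simpa using exp_neg_integrableOn_Ioi 0 (zero_lt_one)
  have g2 : IntegrableOn (fun y : ℝ => y^2 * Real.exp (-y)) (Set.Ioi 0) := by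
    have h := Real.GammaIntegral_convergent (s := 3) (by norm_num)
    refine MeasureTheory.IntegrableOn.congr_fun h (fun y hy => ?_) measurableSet_Ioi
    have : ((3:ℝ) - 1) = ((2:ℕ):ℝ) := by norm_num
    rw [this, Real.rpow_natCast]
    ring
  have hIoi : IntegrableOn (fun y : ℝ => (1 + y^2) * Real.exp (-|y|)) (Set.Ioi 0) := by
    refine MeasureTheory.IntegrableOn.congr_fun (g1.add g2) (fun y hy => ?_) measurableSet_Ioi
    have hy' : |y| = y := abs_of_pos hy
    simp only [Pi.add_apply, hy']
    ring
  have hIic : IntegrableOn (fun y : ℝ => (1 + y^2) * Real.exp (-|y|)) (Set.Iic 0) := by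
    rw [← Measure.map_neg_eq_self (volume : Measure ℝ)]
    have m : MeasurableEmbedding fun x : ℝ => -x := (Homeomorph.neg ℝ).measurableEmbedding
    rw [m.integrableOn_map_iff]
    have : ((fun y : ℝ => (1 + y^2) * Real.exp (-|y|)) ∘ fun x : ℝ => -x)
        = fun y : ℝ => (1 + y^2) * Real.exp (-|y|) := by
      funext y
      simp [Function.comp, abs_neg, neg_sq]
    rw [this]
    have : (fun x : ℝ => -x) ⁻¹' (Set.Iic 0) = Set.Ici 0 := by
      ext z; simp
    rw [this]
    exact Iff.mpr integrableOn_Ici_iff_integrableOn_Ioi hIoi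
  rw [← integrableOn_univ, ← Set.Iic_union_Ioi (a := (0:ℝ))]
  exact hIic.union hIoi

set_option maxHeartbeats 1000000 in
/-- Pointwise bound on `k0`. -/
lemma k0_bound (x y : ℝ) (hx : 0 ≤ x) :
    |k0 x y| ≤ (2*(Real.exp x + 1) + 3) * Real.exp 1 * ((1 + y^2) * Real.exp (-|y|)) := by
  have hex : 1 ≤ Real.exp x := Real.one_le_exp hx
  have he1 : (2:ℝ) ≤ Real.exp 1 := by nlinarith [Real.add_one_le_exp (1:ℝ)]
  have he1' : Real.exp 1 ≤ 2.7182818286 := Real.exp_one_lt_d9.le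
  have habs : |k0 x y| ≤ |n0 y + f0 (y + x)| * y ^ 2 := by
    rw [k0, abs_mul, abs_mul, abs_pow, sq_abs]
    have hs : |Real.sign y| ≤ 1 := by
      rcases lt_trichotomy y 0 with h|h|h
      · rw [Real.sign_of_neg h]; norm_num
      · rw [h, Real.sign_zero]; norm_num
      · rw [Real.sign_of_pos h]; norm_num
    calc |n0 y + f0 (y + x)| * y ^ 2 * |Real.sign y|
        ≤ |n0 y + f0 (y + x)| * y ^ 2 * 1 :=
          mul_le_mul_of_nonneg_left hs (by positivity)
      _ = |n0 y + f0 (y + x)| * y ^ 2 := mul_one _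
  rcases le_or_gt 1 y with h1 | h1
  · -- case y ≥ 1
    have hy0 : 0 < y := lt_of_lt_of_le one_pos h1
    have habsy : |y| = y := abs_of_pos hy0
    have hE : Real.exp 1 ≤ Real.exp y := Real.exp_le_exp.2 h1
    have hden : Real.exp y / 2 ≤ Real.exp y - 1 := by nlinarith
    have hden0 : (0:ℝ) < Real.exp y - 1 := by nlinarith
    have hn0pos : 0 < n0 y := by unfold n0; positivity
    have hn0 : n0 y ≤ 2 * Real.exp (-y) := by
      unfold n0
      calc 1/(Real.exp y - 1) ≤ 1/(Real.exp y / 2) :=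
            one_div_le_one_div_of_le (by positivity) hden
        _ = 2 * Real.exp (-y) := by
            rw [Real.exp_neg]
            field_simp
    have hf : f0 (y + x) ≤ Real.exp (-y) :=
      le_trans (f0_le_exp_neg _) (Real.exp_le_exp.2 (by linarith))
    have hS : |n0 y + f0 (y + x)| ≤ 3 * Real.exp (-y) := by
      rw [abs_of_pos (add_pos hn0pos (f0_pos _))]
      linarith
    calc |k0 x y| ≤ |n0 y + f0 (y + x)| * y ^ 2 := habs
      _ ≤ 3 * Real.exp (-y) * y ^ 2 := mul_le_mul_of_nonneg_right hS (sq_nonneg y)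
      _ = 3 * (y^2 * Real.exp (-y)) := by ring
      _ ≤ (2*(Real.exp x + 1) + 3) * Real.exp 1 * ((1 + y^2) * Real.exp (-y)) := by
          have hA : (3:ℝ) ≤ (2*(Real.exp x + 1) + 3) * Real.exp 1 := by nlinarith
          have h2 : y^2 * Real.exp (-y) ≤ (1 + y^2) * Real.exp (-y) := by
            have := Real.exp_pos (-y)
            nlinarith
          calc 3 * (y^2 * Real.exp (-y)) ≤ 3 * ((1 + y^2) * Real.exp (-y)) := by
                have := Real.exp_pos (-y); nlinarith
            _ ≤ (2*(Real.exp x + 1) + 3) * Real.exp 1 * ((1 + y^2) * Real.exp (-y)) := by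
                have hpos : (0:ℝ) < (1 + y^2) * Real.exp (-y) := by positivity
                nlinarith
      _ = (2*(Real.exp x + 1) + 3) * Real.exp 1 * ((1 + y^2) * Real.exp (-|y|)) := by
          rw [habsy]
  rcases le_or_gt y (-1) with h2 | h2
  · -- case y ≤ -1
    have hy0 : y < 0 := lt_of_le_of_lt h2 (by norm_num)
    have habsy : |y| = -y := abs_of_neg hy0
    have hEy : Real.exp y ≤ Real.exp (-1) := Real.exp_le_exp.2 h2
    have hEneg : Real.exp (-1) ≤ 1/2 := by
      rw [Real.exp_neg]
      rw [inv_le_comm₀ (Real.exp_pos 1) (by norm_num)]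
      norm_num
      linarith
    have hden : (1:ℝ)/2 ≤ 1 - Real.exp y := by linarith
    have hne : Real.exp y - 1 ≠ 0 := by
      have : Real.exp y < 1 := by linarith
      linarith
    have hsum : n0 y + 1 = -(Real.exp y / (1 - Real.exp y)) := by
      unfold n0
      field_simp
      ring
    have ha2 : Real.exp y / (1 - Real.exp y) ≤ 2 * Real.exp y := by
      rw [div_le_iff₀ (by linarith)]
      nlinarith [Real.exp_pos y]
    have ha0 : 0 ≤ Real.exp y / (1 - Real.exp y) := by
      apply div_nonneg (Real.exp_pos y).le
      linarith
    have hb2 : 1 - f0 (y + x) ≤ Real.exp y * Real.exp x := by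
      calc 1 - f0 (y + x) ≤ Real.exp (y + x) := one_sub_f0_le _
        _ = Real.exp y * Real.exp x := Real.exp_add _ _
    have hb0 : 0 ≤ 1 - f0 (y + x) := by linarith [f0_le_one (y + x)]
    have hS : |n0 y + f0 (y + x)| ≤ (Real.exp x + 2) * Real.exp y := by
      have hrw : n0 y + f0 (y + x)
          = -(Real.exp y / (1 - Real.exp y) + (1 - f0 (y + x))) := by
        have := hsum
        linarith
      rw [hrw, abs_neg, abs_of_nonneg (by linarith)]
      nlinarith
    calc |k0 x y| ≤ |n0 y + f0 (y + x)| * y ^ 2 := habs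
      _ ≤ (Real.exp x + 2) * Real.exp y * y ^ 2 :=
          mul_le_mul_of_nonneg_right hS (sq_nonneg y)
      _ ≤ (2*(Real.exp x + 1) + 3) * Real.exp 1 * ((1 + y^2) * Real.exp (-|y|)) := by
          rw [habsy, neg_neg]
          have hpos := Real.exp_pos y
          have hc1 : Real.exp x + 2 ≤ (2*(Real.exp x + 1) + 3) * Real.exp 1 := by nlinarith
          calc (Real.exp x + 2) * Real.exp y * y ^ 2
              = (Real.exp x + 2) * (y ^ 2 * Real.exp y) := by ring
            _ ≤ ((2*(Real.exp x + 1) + 3) * Real.exp 1) * (y ^ 2 * Real.exp y) := by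
                apply mul_le_mul_of_nonneg_right hc1 (by positivity)
            _ ≤ ((2*(Real.exp x + 1) + 3) * Real.exp 1) * ((1 + y^2) * Real.exp y) := by
                apply mul_le_mul_of_nonneg_left ?_ (by positivity)
                nlinarith
            _ = (2*(Real.exp x + 1) + 3) * Real.exp 1 * ((1 + y^2) * Real.exp y) := by ring
  · -- case -1 < y < 1
    have habsy : |y| ≤ 1 := abs_le.2 ⟨le_of_lt h2, le_of_lt h1⟩
    have hb : |n0 y| * y ^ 2 ≤ Real.exp 1 * |y| := by
      rcases lt_trichotomy y 0 with hy | hy | hy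
      · -- y < 0
        have h01 : 0 < -y := by linarith
        have hkey : -y * Real.exp y ≤ 1 - Real.exp y := by
          have h3 : (-y + 1) * Real.exp y ≤ Real.exp (-y) * Real.exp y :=
            mul_le_mul_of_nonneg_right (Real.add_one_le_exp (-y)) (Real.exp_pos y).le
          rw [← Real.exp_add] at h3
          simp only [neg_add_cancel, Real.exp_zero] at h3
          nlinarith [Real.exp_pos y]
        have hpos : 0 < 1 - Real.exp y := by nlinarith [mul_pos h01 (Real.exp_pos y)]
        have hn : |n0 y| = 1 / (1 - Real.exp y) := by
          unfold n0
          rw [abs_div, abs_one, abs_of_neg (by linarith : Real.exp y - 1 < 0)]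
          ring_nf
        have h4 : |n0 y| ≤ 1 / (-y * Real.exp y) := by
          rw [hn]
          exact one_div_le_one_div_of_le (by positivity) hkey
        have h5 : (1:ℝ) / (-y * Real.exp y) = Real.exp (-y) / (-y) := by
          rw [Real.exp_neg]
          field_simp
        have h6 : Real.exp (-y) ≤ Real.exp 1 := Real.exp_le_exp.2 (by linarith)
        have h7 : |n0 y| ≤ Real.exp 1 / (-y) := by
          rw [h5] at h4
          exact h4.trans (by gcongr)
        have h8 : |n0 y| * y ^ 2 ≤ Real.exp 1 / (-y) * y ^ 2 :=
          mul_le_mul_of_nonneg_right h7 (sq_nonneg y)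
        have h9 : Real.exp 1 / (-y) * y ^ 2 = Real.exp 1 * (-y) := by
          field_simp
        rw [h9] at h8
        rw [abs_of_neg hy]
        exact h8
      · simp [hy, n0]
      · -- y > 0
        have hkey : y ≤ Real.exp y - 1 := by linarith [Real.add_one_le_exp y]
        have hpos : (0:ℝ) < Real.exp y - 1 := by linarith
        have hn : |n0 y| ≤ 1 / y := by
          unfold n0
          rw [abs_div, abs_one, abs_of_pos hpos]
          exact one_div_le_one_div_of_le hy hkey
        have h8 : |n0 y| * y^2 ≤ (1/y) * y^2 :=
          mul_le_mul_of_nonneg_right hn (sq_nonneg y)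
        have h5 : (1/y) * y^2 = y := by
          field_simp
        rw [h5] at h8
        rw [abs_of_pos hy]
        have hy2 : (1:ℝ) * y ≤ Real.exp 1 * y :=
          mul_le_mul_of_nonneg_right (by linarith) hy.le
        linarith
    -- combine
    have hS : |n0 y + f0 (y + x)| * y ^ 2 ≤ Real.exp 1 * |y| + y ^ 2 := by
      have habs2 : |n0 y + f0 (y + x)| ≤ |n0 y| + f0 (y + x) := by
        calc |n0 y + f0 (y + x)| ≤ |n0 y| + |f0 (y + x)| := abs_add_le _ _
          _ = |n0 y| + f0 (y + x) := by rw [abs_of_pos (f0_pos _)]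
      have hmul : |n0 y + f0 (y + x)| * y ^ 2 ≤ (|n0 y| + f0 (y + x)) * y ^ 2 :=
        mul_le_mul_of_nonneg_right habs2 (sq_nonneg y)
      have hexpand : (|n0 y| + f0 (y + x)) * y ^ 2 = |n0 y| * y ^ 2 + f0 (y + x) * y ^ 2 := by
        ring
      have hf1 : f0 (y + x) * y ^ 2 ≤ y ^ 2 :=
        mul_le_of_le_one_left (sq_nonneg y) (f0_le_one (y + x))
      linarith
    have hsq : y ^ 2 ≤ 1 := by
      rw [← sq_abs]
      exact pow_le_one₀ (abs_nonneg y) habsy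
    have hL : |k0 x y| ≤ Real.exp 1 + 1 := by
      have h10 : Real.exp 1 * |y| ≤ Real.exp 1 * 1 :=
        mul_le_mul_of_nonneg_left habsy (Real.exp_pos 1).le
      calc |k0 x y| ≤ |n0 y + f0 (y + x)| * y ^ 2 := habs
        _ ≤ Real.exp 1 * |y| + y ^ 2 := hS
        _ ≤ Real.exp 1 + 1 := by linarith
    have hr1 : Real.exp (-(1:ℝ)) ≤ Real.exp (-|y|) := Real.exp_le_exp.2 (by linarith)
    have hone : Real.exp 1 * Real.exp (-1) = 1 := by
      rw [← Real.exp_add]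
      norm_num
    have hR : 2*(Real.exp x + 1) + 3
        ≤ (2*(Real.exp x + 1) + 3) * Real.exp 1 * ((1 + y^2) * Real.exp (-|y|)) := by
      have hAnn : (0:ℝ) ≤ 2*(Real.exp x + 1) + 3 := by positivity
      have h11 : Real.exp (-(1:ℝ)) ≤ (1 + y^2) * Real.exp (-|y|) := by
        nlinarith [Real.exp_pos (-|y|), sq_nonneg y]
      calc 2*(Real.exp x + 1) + 3
          = (2*(Real.exp x + 1) + 3) * Real.exp 1 * Real.exp (-1) := by
            rw [mul_assoc, hone, mul_one]
        _ ≤ (2*(Real.exp x + 1) + 3) * Real.exp 1 * ((1 + y^2) * Real.exp (-|y|)) := by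
            apply mul_le_mul_of_nonneg_left h11 (by positivity)
    have hfinal : Real.exp 1 + 1 ≤ 2*(Real.exp x + 1) + 3 := by nlinarith
    linarith

/-- `k0 x` is integrable for `0 ≤ x`. -/
lemma integrable_k0 (x : ℝ) (hx : 0 ≤ x) : Integrable (k0 x) := by
  refine Integrable.mono' (int_H.const_mul ((2*(Real.exp x + 1) + 3) * Real.exp 1))
    (measurable_k0 x).aestronglyMeasurable ?_
  filter_upwards with y
  simpa [Real.norm_eq_abs] using k0_bound x y hx

theorem gamma0_monotone (x₁ x₂ : ℝ) (h0 : 0 ≤ x₁) (h12 : x₁ ≤ x₂) :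
    gamma0 x₁ ≤ gamma0 x₂ := by
  have hx2 : 0 ≤ x₂ := le_trans h0 h12
  have hI1 : Integrable (k0 x₁) := integrable_k0 x₁ h0
  have hI2 : Integrable (k0 x₂) := integrable_k0 x₂ hx2
  rw [gamma0, gamma0, ← sub_nonneg, ← integral_sub hI2 hI1]
  set g := fun y => k0 x₂ y - k0 x₁ y with hg
  have hgint : Integrable g := hI2.sub hI1
  have hnegint : Integrable (fun y => g (-y)) := hgint.comp_neg
  have h2 : (2:ℝ) * ∫ y, g y = ∫ y, (g y + g (-y)) := by
    rw [integral_add hgint hnegint, integral_neg_eq_self]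
    ring
  have hpt : ∀ y, 0 ≤ g y + g (-y) := by
    intro y
    have hrewrite : g y + g (-y)
        = ((f0 (y + x₂) + f0 (x₁ - y)) - (f0 (y + x₁) + f0 (x₂ - y)))
          * y ^ 2 * Real.sign y := by
      rw [hg]
      simp only [k0]
      rw [Real.sign_neg]
      have hy2 : (-y) ^ 2 = y ^ 2 := by ring
      rw [hy2]
      have e1 : -y + x₁ = x₁ - y := by ring
      have e2 : -y + x₂ = x₂ - y := by ring
      rw [e1, e2]
      ring
    rw [hrewrite]
    rcases lt_trichotomy y 0 with hy | hy | hy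
    · rw [Real.sign_of_neg hy]
      have hkey := key_ineq x₁ x₂ (-y) h0 h12 (by linarith)
      have e1 : x₁ - -y = x₁ + y := by ring
      have e2 : x₂ - -y = x₂ + y := by ring
      have e3 : x₁ + -y = x₁ - y := by ring
      have e4 : x₂ + -y = x₂ - y := by ring
      rw [e1, e2, e3, e4] at hkey
      have hc : f0 (y + x₂) = f0 (x₂ + y) := by rw [add_comm]
      have hc2 : f0 (y + x₁) = f0 (x₁ + y) := by rw [add_comm]
      rw [hc, hc2]
      nlinarith [sq_nonneg y]
    · simp [hy, Real.sign_zero]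
    · rw [Real.sign_of_pos hy]
      have hkey := key_ineq x₁ x₂ y h0 h12 (le_of_lt hy)
      have hc : f0 (y + x₂) = f0 (x₂ + y) := by rw [add_comm]
      have hc2 : f0 (y + x₁) = f0 (x₁ + y) := by rw [add_comm]
      rw [hc, hc2]
      nlinarith [sq_nonneg y]
  have hnn : 0 ≤ ∫ y, (g y + g (-y)) := integral_nonneg hpt
  linarith [h2, hnn]
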